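/- For every L > 0 and all I₁, I₂ ∈ ℝ, the real 6×4 matrix M with rows: (1/L³, −3/L⁴, 0, 0); (−3/(4L⁷), 21/(4L⁸), 0, 0); (−√7/(6L⁷), 7√7/(6L⁸), 0, 0); (3/(8L⁷), −21/(8L⁸), 0, 0); (−(1990I₁ + 911√10 I₂)/(960L⁸), (1990I₁ + 911√10 I₂)/(120L⁹), −199/(96L⁸), −911/(96√10 L⁸)); (−(911√10 I₁ + 735I₂)/(960L⁸), (911√10 I₁ + 735I₂)/(120L⁹), −911/(96√10 L⁸), −49/(64L⁸)) has rank exactly 4. -/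

import Mathlib

open Real Matrix

private lemma rank_submatrix_le_aux {m n : ℕ} (f : Fin n → Fin m) (A : Matrix (Fin m) (Fin n) ℝ) :
    (A.submatrix f id).rank ≤ A.rank := by
  have h : (A.submatrix f id).mulVecLin = (LinearMap.funLeft ℝ ℝ f).comp A.mulVecLin := by
    ext v i
    simp [Matrix.mulVecLin, Matrix.mulVec, Matrix.submatrix, LinearMap.funLeft, dotProduct,
      Pi.single_apply, mul_ite, Finset.sum_ite_eq]
  rw [Matrix.rank, Matrix.rank, h, LinearMap.range_comp]
  exact Submodule.finrank_map_le (LinearMap.funLeft ℝ ℝ f) (LinearMap.range A.mulVecLin)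

/-- The frequency matrix `M_Ω(L,I₁,I₂)` around the circular polar
equilibria `E₃,₄` has rank exactly 4 (Han–Li–Yi nondegeneracy). -/
theorem frequency_matrix_polar_rank (L I₁ I₂ : ℝ) (hL : 0 < L) :
    (!![1 / L ^ 3, -3 / L ^ 4, 0, 0;
        -3 / (4 * L ^ 7), 21 / (4 * L ^ 8), 0, 0;
        -(Real.sqrt 7) / (6 * L ^ 7), 7 * Real.sqrt 7 / (6 * L ^ 8), 0, 0;
        3 / (8 * L ^ 7), -21 / (8 * L ^ 8), 0, 0;
        -(1990 * I₁ + 911 * Real.sqrt 10 * I₂) / (960 * L ^ 8),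
          (1990 * I₁ + 911 * Real.sqrt 10 * I₂) / (120 * L ^ 9),
          -199 / (96 * L ^ 8), -911 / (96 * Real.sqrt 10 * L ^ 8);
        -(911 * Real.sqrt 10 * I₁ + 735 * I₂) / (960 * L ^ 8),
          (911 * Real.sqrt 10 * I₁ + 735 * I₂) / (120 * L ^ 9),
          -911 / (96 * Real.sqrt 10 * L ^ 8), -49 / (64 * L ^ 8)] :
      Matrix (Fin 6) (Fin 4) ℝ).rank = 4 := by
  have hL0 : L ≠ 0 := ne_of_gt hL
  have hs : Real.sqrt 10 ^ 2 = 10 := Real.sq_sqrt (by norm_num)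
  have hs0 : Real.sqrt 10 ≠ 0 := by positivity
  set M : Matrix (Fin 6) (Fin 4) ℝ :=
    !![1 / L ^ 3, -3 / L ^ 4, 0, 0;
        -3 / (4 * L ^ 7), 21 / (4 * L ^ 8), 0, 0;
        -(Real.sqrt 7) / (6 * L ^ 7), 7 * Real.sqrt 7 / (6 * L ^ 8), 0, 0;
        3 / (8 * L ^ 7), -21 / (8 * L ^ 8), 0, 0;
        -(1990 * I₁ + 911 * Real.sqrt 10 * I₂) / (960 * L ^ 8),
          (1990 * I₁ + 911 * Real.sqrt 10 * I₂) / (120 * L ^ 9),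
          -199 / (96 * L ^ 8), -911 / (96 * Real.sqrt 10 * L ^ 8);
        -(911 * Real.sqrt 10 * I₁ + 735 * I₂) / (960 * L ^ 8),
          (911 * Real.sqrt 10 * I₁ + 735 * I₂) / (120 * L ^ 9),
          -911 / (96 * Real.sqrt 10 * L ^ 8), -49 / (64 * L ^ 8)] with hM
  set A : Matrix (Fin 2) (Fin 2) ℝ := !![1 / L ^ 3, -3 / L ^ 4;
      -3 / (4 * L ^ 7), 21 / (4 * L ^ 8)] with hA
  set C : Matrix (Fin 2) (Fin 2) ℝ :=
    !![-(1990 * I₁ + 911 * Real.sqrt 10 * I₂) / (960 * L ^ 8),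
          (1990 * I₁ + 911 * Real.sqrt 10 * I₂) / (120 * L ^ 9);
        -(911 * Real.sqrt 10 * I₁ + 735 * I₂) / (960 * L ^ 8),
          (911 * Real.sqrt 10 * I₁ + 735 * I₂) / (120 * L ^ 9)] with hC
  set D : Matrix (Fin 2) (Fin 2) ℝ := !![-199 / (96 * L ^ 8), -911 / (96 * Real.sqrt 10 * L ^ 8);
      -911 / (96 * Real.sqrt 10 * L ^ 8), -49 / (64 * L ^ 8)] with hD
  set B : Matrix (Fin 2 ⊕ Fin 2) (Fin 2 ⊕ Fin 2) ℝ := Matrix.fromBlocks A 0 C D with hB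
  have hsub : M.submatrix (![0,1,4,5] : Fin 4 → Fin 6) id
      = B.submatrix finSumFinEquiv.symm finSumFinEquiv.symm := by
    ext i j
    fin_cases i <;> fin_cases j <;> rfl
  have hdetB : B.det = A.det * D.det := Matrix.det_fromBlocks_zero₁₂ A C D
  have hdetA : A.det = 3 / L ^ 11 := by
    rw [hA, Matrix.det_fin_two_of]; field_simp; ring
  have hdetD : D.det = -85457 / (11520 * L ^ 16) := by
    rw [hD, Matrix.det_fin_two_of]
    field_simp
    ring_nf
    linear_combination 61188415488 * hs
  have hdetN : (M.submatrix (![0,1,4,5] : Fin 4 → Fin 6) id).det ≠ 0 := by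
    rw [hsub, Matrix.det_submatrix_equiv_self, hdetB, hdetA, hdetD]
    have h1 : (3:ℝ) / L ^ 11 ≠ 0 := by positivity
    have h2 : (-85457:ℝ) / (11520 * L ^ 16) ≠ 0 :=
      div_ne_zero (by norm_num) (by positivity)
    exact mul_ne_zero h1 h2
  have hrankN : (M.submatrix (![0,1,4,5] : Fin 4 → Fin 6) id).rank = 4 := by
    have := Matrix.rank_of_isUnit (M.submatrix (![0,1,4,5] : Fin 4 → Fin 6) id)
      ((Matrix.isUnit_iff_isUnit_det _).2 hdetN.isUnit)
    simpa using this
  refine le_antisymm (Matrix.rank_le_width M) ?_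
  calc 4 = (M.submatrix (![0,1,4,5] : Fin 4 → Fin 6) id).rank := hrankN.symm
    _ ≤ M.rank := rank_submatrix_le_aux _ M
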